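/- Let x₁,…,xₙ be positive reals (n ≥ 2), not all equal, and let a ≥ 1 with n - a + 1 > 0. Let δ > 0 and index i be such that K := (∑_j x_j - δ)/(n - a + 1) - x_i > 0. Then the limit as λ → ∞ of e^{-λ(∑_j x_j - δ)/(n-a+1)} / ( -∑_{i=1}^n ln(1 - e^{-λ x_i}) ) equals 0. -/
import Mathlib


open Real Filter

theorem stmt9 (n : ℕ) (hn : 2 ≤ n) (x : Fin n → ℝ) (hx : ∀ i, 0 < x i)
    (hne : ∃ i j, x i ≠ x j) (a : ℝ) (ha : 1 ≤ a) (hna : (n : ℝ) - a + 1 > 0)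
    (δ : ℝ) (hδ : 0 < δ) (i : Fin n)
    (hK : (∑ j, x j - δ) / ((n : ℝ) - a + 1) - x i > 0) :
    Tendsto (fun l : ℝ =>
        Real.exp (-(l * ((∑ j, x j - δ) / ((n : ℝ) - a + 1)))) /
          (-∑ k, Real.log (1 - Real.exp (-(l * x k)))))
      atTop (nhds 0) := by
  set S := (∑ j, x j - δ) / ((n : ℝ) - a + 1) with hSdef
  have hg : Tendsto (fun l : ℝ => Real.exp (-(l * (S - x i)))) atTop (nhds 0) := by
    have h1 : Tendsto (fun l : ℝ => l * (S - x i)) atTop atTop :=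
      Tendsto.atTop_mul_const hK tendsto_id
    exact Real.tendsto_exp_neg_atTop_nhds_zero.comp h1
  -- key pointwise facts for l > 0
  have key : ∀ l : ℝ, 0 < l →
      Real.exp (-(l * x i)) ≤ -∑ k, Real.log (1 - Real.exp (-(l * x k))) := by
    intro l hl
    have hterm : ∀ k : Fin n, Real.exp (-(l * x k)) ≤
        -Real.log (1 - Real.exp (-(l * x k))) := by
      intro k
      have h1 : Real.exp (-(l * x k)) < 1 := by
        rw [Real.exp_lt_one_iff]
        nlinarith [hx k]
      have h2 : 0 < 1 - Real.exp (-(l * x k)) := by linarith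
      have := Real.log_le_sub_one_of_pos h2
      linarith
    have hnonneg : ∀ k ∈ Finset.univ, 0 ≤ -Real.log (1 - Real.exp (-(l * x k))) := by
      intro k _
      have := (Real.exp_pos (-(l * x k))).le
      linarith [hterm k]
    have hsum : -Real.log (1 - Real.exp (-(l * x i))) ≤
        ∑ k, -Real.log (1 - Real.exp (-(l * x k))) :=
      Finset.single_le_sum hnonneg (Finset.mem_univ i)
    have : ∑ k, -Real.log (1 - Real.exp (-(l * x k))) =
        -∑ k, Real.log (1 - Real.exp (-(l * x k))) := by
      simp [Finset.sum_neg_distrib]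
    linarith [hterm i]
  refine squeeze_zero' ?_ ?_ hg
  · filter_upwards [eventually_gt_atTop 0] with l hl
    have hD : 0 < -∑ k, Real.log (1 - Real.exp (-(l * x k))) :=
      lt_of_lt_of_le (Real.exp_pos _) (key l hl)
    exact div_nonneg (Real.exp_pos _).le hD.le
  · filter_upwards [eventually_gt_atTop 0] with l hl
    have hD := key l hl
    have hpos : 0 < Real.exp (-(l * x i)) := Real.exp_pos _
    have h1 : Real.exp (-(l * S)) / (-∑ k, Real.log (1 - Real.exp (-(l * x k)))) ≤
        Real.exp (-(l * S)) / Real.exp (-(l * x i)) :=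
      div_le_div_of_nonneg_left (Real.exp_pos _).le hpos hD
    have h2 : Real.exp (-(l * S)) / Real.exp (-(l * x i)) =
        Real.exp (-(l * (S - x i))) := by
      rw [← Real.exp_sub]; ring_nf
    linarith [h1, h2.le, h2.ge]
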